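/- Let k be a σ-field, A a nonzero k-σ-algebra, n ≥ 1, and d ≥ 1. Suppose χ is an invertible n × n matrix over A ⊗[k] A satisfying the cocycle condition ∂₂(χ) = ∂₁(χ) · ∂₃(χ) (the homomorphisms ∂ᵢ applied entrywise) and τ^d(χ) = 1 (the identity matrix; τ^d applied entrywise). Then there exist an invertible n × n matrix α over A and an invertible n × n matrix a over k such that χ = δ₁(α) · δ₂(α)⁻¹ and σ_A^d(α) = algebraMap k A applied entrywise to a. (This is the cocycle-level content of the result that for G = {g ∈ GLₙ | σ^d(g) = 1}, every G-torsor is isomorphic to one of the form Y = {x ∈ GLₙ | σ^d(x) = a} with a ∈ GLₙ(k).) -/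

import Mathlib

open TensorProduct Matrix

/-- `δ₁ : A → A ⊗[k] A`, `a ↦ 1 ⊗ a`. -/
noncomputable def amitsurD1 (k A : Type*) [CommRing k] [CommRing A] [Algebra k A] :
    A →ₐ[k] A ⊗[k] A :=
  Algebra.TensorProduct.includeRight

/-- `δ₂ : A → A ⊗[k] A`, `a ↦ a ⊗ 1`. -/
noncomputable def amitsurD2 (k A : Type*) [CommRing k] [CommRing A] [Algebra k A] :
    A →ₐ[k] A ⊗[k] A :=
  Algebra.TensorProduct.includeLeft

/-- `∂₁ : A ⊗[k] A → A ⊗[k] A ⊗[k] A`, `a ⊗ b ↦ 1 ⊗ a ⊗ b`. -/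
noncomputable def amitsurP1 (k A : Type*) [CommRing k] [CommRing A] [Algebra k A] :
    A ⊗[k] A →ₐ[k] A ⊗[k] (A ⊗[k] A) :=
  Algebra.TensorProduct.includeRight

/-- `∂₂ : A ⊗[k] A → A ⊗[k] A ⊗[k] A`, `a ⊗ b ↦ a ⊗ 1 ⊗ b`. -/
noncomputable def amitsurP2 (k A : Type*) [CommRing k] [CommRing A] [Algebra k A] :
    A ⊗[k] A →ₐ[k] A ⊗[k] (A ⊗[k] A) :=
  Algebra.TensorProduct.map (AlgHom.id k A) Algebra.TensorProduct.includeRight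

/-- `∂₃ : A ⊗[k] A → A ⊗[k] A ⊗[k] A`, `a ⊗ b ↦ a ⊗ b ⊗ 1`. -/
noncomputable def amitsurP3 (k A : Type*) [CommRing k] [CommRing A] [Algebra k A] :
    A ⊗[k] A →ₐ[k] A ⊗[k] (A ⊗[k] A) :=
  Algebra.TensorProduct.map (AlgHom.id k A) Algebra.TensorProduct.includeLeft

section Aux

variable {k A : Type*} [CommRing k] [CommRing A] [Algebra k A]

lemma aD1_tmul (a : A) : amitsurD1 k A a = 1 ⊗ₜ[k] a := rfl
lemma aD2_tmul (a : A) : amitsurD2 k A a = a ⊗ₜ[k] 1 := rfl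
lemma aP1_tmul (a b : A) : amitsurP1 k A (a ⊗ₜ[k] b) = 1 ⊗ₜ[k] (a ⊗ₜ[k] b) := rfl
lemma aP2_tmul (a b : A) : amitsurP2 k A (a ⊗ₜ[k] b) = a ⊗ₜ[k] ((1:A) ⊗ₜ[k] b) := by
  simp [amitsurP2]
lemma aP3_tmul (a b : A) : amitsurP3 k A (a ⊗ₜ[k] b) = a ⊗ₜ[k] (b ⊗ₜ[k] (1:A)) := by
  simp [amitsurP3]

/-- multiplication `A ⊗ A → A`. -/
noncomputable def amitsurMu (k A : Type*) [CommRing k] [CommRing A] [Algebra k A] :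
    A ⊗[k] A →ₐ[k] A := Algebra.TensorProduct.lmul' k

lemma aMu_tmul (a b : A) : amitsurMu k A (a ⊗ₜ[k] b) = a * b :=
  Algebra.TensorProduct.lmul'_apply_tmul a b

/-- multiply slots 2 and 3. -/
noncomputable def amitsurM23 (k A : Type*) [CommRing k] [CommRing A] [Algebra k A] :
    A ⊗[k] (A ⊗[k] A) →ₐ[k] A ⊗[k] A :=
  Algebra.TensorProduct.map (AlgHom.id k A) (amitsurMu k A)

lemma m23_P1 (z : A ⊗[k] A) :
    amitsurM23 k A (amitsurP1 k A z) = amitsurD1 k A (amitsurMu k A z) := by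
  induction z with
  | zero => simp
  | tmul u t => simp [aP1_tmul, amitsurM23, aD1_tmul, aMu_tmul]
  | add x y hx hy => simp [map_add, hx, hy]

lemma m23_P2 (z : A ⊗[k] A) : amitsurM23 k A (amitsurP2 k A z) = z := by
  induction z with
  | zero => simp
  | tmul u t => simp [aP2_tmul, amitsurM23, aMu_tmul]
  | add x y hx hy => simp [map_add, hx, hy]

lemma m23_P3 (z : A ⊗[k] A) : amitsurM23 k A (amitsurP3 k A z) = z := by
  induction z with
  | zero => simp
  | tmul u t => simp [aP3_tmul, amitsurM23, aMu_tmul]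
  | add x y hx hy => simp [map_add, hx, hy]

/-- contraction with a functional on the second slot. -/
noncomputable def amitsurC (f : A →ₗ[k] k) : A ⊗[k] A →ₗ[k] A :=
  (TensorProduct.rid k A).toLinearMap ∘ₗ (LinearMap.lTensor A f)

lemma aC_tmul (f : A →ₗ[k] k) (u t : A) : amitsurC f (u ⊗ₜ[k] t) = f t • u := by
  simp [amitsurC]

/-- contraction with a functional on the third slot. -/
noncomputable def amitsurCC (f : A →ₗ[k] k) : A ⊗[k] (A ⊗[k] A) →ₗ[k] A ⊗[k] A :=
  LinearMap.lTensor A (amitsurC f)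

lemma CC_P1 (f : A →ₗ[k] k) (z : A ⊗[k] A) :
    amitsurCC f (amitsurP1 k A z) = amitsurD1 k A (amitsurC f z) := by
  induction z with
  | zero => simp
  | tmul u t => simp [aP1_tmul, amitsurCC, aC_tmul, aD1_tmul, tmul_smul]
  | add x y hx hy => simp [map_add, hx, hy]

lemma CC_P2 (f : A →ₗ[k] k) (z : A ⊗[k] A) :
    amitsurCC f (amitsurP2 k A z) = amitsurD2 k A (amitsurC f z) := by
  induction z with
  | zero => simp
  | tmul u t =>
      simp [aP2_tmul, amitsurCC, aC_tmul, aD2_tmul, tmul_smul, smul_tmul]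
  | add x y hx hy => simp [map_add, hx, hy]

lemma aC_mul_left (f : A →ₗ[k] k) (u : A) (w : A ⊗[k] A) :
    amitsurC f ((u ⊗ₜ[k] (1:A)) * w) = u * amitsurC f w := by
  induction w with
  | zero => simp
  | tmul u' t =>
      simp [Algebra.TensorProduct.tmul_mul_tmul, aC_tmul, mul_smul_comm]
  | add x y hx hy => simp [mul_add, map_add, hx, hy]

lemma CC_P3_mul (f : A →ₗ[k] k) (r : A ⊗[k] A) (y : A ⊗[k] (A ⊗[k] A)) :
    amitsurCC f (amitsurP3 k A r * y) = r * amitsurCC f y := by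
  induction r with
  | zero => simp
  | tmul a u =>
      induction y with
      | zero => simp
      | tmul a' w =>
          simp only [aP3_tmul, amitsurCC, Algebra.TensorProduct.tmul_mul_tmul,
            LinearMap.lTensor_tmul]
          rw [aC_mul_left]
      | add x y hx hy => simp only [mul_add, map_add, hx, hy]
  | add x y hx hy => simp only [map_add, add_mul, hx, hy]

end Aux



section Aux2
variable {k A : Type*} [Field k] [CommRing A] [Algebra k A]

noncomputable def amitsurC1 (f : A →ₗ[k] k) : A ⊗[k] A →ₗ[k] A :=
  (TensorProduct.lid k A).toLinearMap ∘ₗ (LinearMap.rTensor A f)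

lemma aC1_tmul (f : A →ₗ[k] k) (u t : A) : amitsurC1 f (u ⊗ₜ[k] t) = f u • t := by
  simp [amitsurC1]

variable {ι : Type*} [DecidableEq ι] (bA : Module.Basis ι k A)

noncomputable def amitsurF : A ⊗[k] A ≃ₗ[k] (ι →₀ A) :=
  (LinearEquiv.lTensor A bA.repr ≪≫ₗ TensorProduct.finsuppScalarRight k k A ι)

lemma aF_tmul_apply (u t : A) (b : ι) :
    amitsurF bA (u ⊗ₜ[k] t) b = bA.repr t b • u := by
  simp [amitsurF, TensorProduct.finsuppScalarRight_apply_tmul_apply]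

lemma aF_eq_C (z : A ⊗[k] A) (b : ι) :
    amitsurF bA z b = amitsurC (bA.coord b) z := by
  induction z with
  | zero => simp
  | tmul u t => simp [aF_tmul_apply, aC_tmul, Module.Basis.coord_apply]
  | add x y hx hy => simp [map_add, hx, hy]

lemma aF_symm_single (b : ι) (a : A) :
    (amitsurF bA).symm (Finsupp.single b a) = a ⊗ₜ[k] bA b := by
  apply (amitsurF bA).injective
  rw [LinearEquiv.apply_symm_apply]
  ext b'
  rw [aF_tmul_apply]
  simp [Finsupp.single_apply, Module.Basis.repr_self_apply]

lemma aMu_recover (z : A ⊗[k] A) (s : Finset ι) (hs : (amitsurF bA z).support ⊆ s) :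
    amitsurMu k A z = ∑ b ∈ s, bA b * amitsurF bA z b := by
  have key : ∀ g : ι →₀ A,
      amitsurMu k A ((amitsurF bA).symm g) = ∑ b ∈ g.support, bA b * g b := by
    intro g
    have hsg : (amitsurF bA).symm g = ∑ b ∈ g.support, g b ⊗ₜ[k] bA b := by
      conv_lhs => rw [← Finsupp.sum_single g]
      rw [Finsupp.sum, map_sum]
      exact Finset.sum_congr rfl fun b _ => aF_symm_single bA b (g b)
    rw [hsg, map_sum]
    exact Finset.sum_congr rfl fun b _ => by rw [aMu_tmul, mul_comm]
  rw [← Finset.sum_subset hs (by intro b _ hb; simp [Finsupp.notMem_support_iff.mp hb])]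
  conv_lhs => rw [← (amitsurF bA).symm_apply_apply z]
  exact key _

lemma exists_algebraMap_of_tmul_eq [Nontrivial A] (x : A) (h : x ⊗ₜ[k] (1:A) = 1 ⊗ₜ[k] x) :
    ∃ c : k, x = algebraMap k A c := by
  have h1 : LinearIndepOn k id ({(1:A)} : Set A) :=
    (linearIndepOn_singleton_iff k).mpr one_ne_zero
  let b := Module.Basis.extend h1
  have h1mem : (1:A) ∈ h1.extend (Set.subset_univ _) := h1.subset_extend _ rfl
  let f₀ : A →ₗ[k] k := b.coord ⟨1, h1mem⟩
  have hb1 : b ⟨1, h1mem⟩ = 1 := Module.Basis.extend_apply_self h1 _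
  have hf₀ : f₀ (1:A) = 1 := by
    have h2 : f₀ (b ⟨1, h1mem⟩) = 1 := by simp [f₀]
    rwa [hb1] at h2
  have hx := congrArg (amitsurC1 f₀) h
  rw [aC1_tmul, aC1_tmul, hf₀, one_smul] at hx
  exact ⟨f₀ x, by rw [Algebra.algebraMap_eq_smul_one]; exact hx.symm⟩

end Aux2


section Aux3
variable {k A : Type*} [CommRing k] [CommRing A] [Algebra k A]


variable {n : ℕ}

/-- the descent space -/
noncomputable def amitsurV (χM : Matrix (Fin n) (Fin n) (A ⊗[k] A)) :
    Submodule k (Fin n → A) where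
  carrier := {v | ∀ i, amitsurD1 k A (v i) = ∑ j, χM i j * amitsurD2 k A (v j)}
  add_mem' := by
    intro x y hx hy i
    simp only [Pi.add_apply, map_add, hx i, hy i, mul_add, Finset.sum_add_distrib]
  zero_mem' := by simp
  smul_mem' := by
    intro c v hv i
    simp only [Pi.smul_apply, _root_.map_smul, hv i, Finset.smul_sum]
    exact Finset.sum_congr rfl fun j _ => (mul_smul_comm _ _ _).symm

/-- the twisted cocycle predicate -/
def amitsurKP (χM : Matrix (Fin n) (Fin n) (A ⊗[k] A)) (x : Fin n → A ⊗[k] A) : Prop :=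
  ∀ i, amitsurP1 k A (x i) = ∑ j, amitsurP3 k A (χM i j) * amitsurP2 k A (x j)

lemma KP_of_V {χM : Matrix (Fin n) (Fin n) (A ⊗[k] A)} {v : Fin n → A}
    (hv : v ∈ amitsurV χM) (a : A) : amitsurKP χM (fun i => v i ⊗ₜ[k] a) := by
  intro i
  have hv_i := hv i
  have hL : (amitsurP1 k A) (v i ⊗ₜ[k] a)
      = amitsurP3 k A (amitsurD1 k A (v i)) * ((1:A) ⊗ₜ[k] ((1:A) ⊗ₜ[k] a)) := by
    rw [aP1_tmul, aD1_tmul, aP3_tmul, Algebra.TensorProduct.tmul_mul_tmul,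
      Algebra.TensorProduct.tmul_mul_tmul]
    simp
  rw [hL, hv_i, map_sum, Finset.sum_mul]
  refine Finset.sum_congr rfl fun j _ => ?_
  rw [_root_.map_mul, aD2_tmul, aP3_tmul, aP2_tmul, mul_assoc,
    Algebra.TensorProduct.tmul_mul_tmul, Algebra.TensorProduct.tmul_mul_tmul]
  simp

lemma KP_sum {χM : Matrix (Fin n) (Fin n) (A ⊗[k] A)} {L : Type*} (s : Finset L)
    (x : L → Fin n → A ⊗[k] A) (h : ∀ l ∈ s, amitsurKP χM (x l)) :
    amitsurKP χM (fun i => ∑ l ∈ s, x l i) := by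
  intro i
  rw [map_sum]
  rw [Finset.sum_congr rfl fun l hl => h l hl i]
  rw [Finset.sum_comm]
  refine Finset.sum_congr rfl fun j _ => ?_
  rw [map_sum, Finset.mul_sum]

lemma mulVec_sum_apply {R : Type*} [CommRing R] (M : Matrix (Fin n) (Fin n) R)
    (w : Fin n → R) (i : Fin n) : (M *ᵥ w) i = ∑ j, M i j * w j := rfl

lemma KP_inv_d1 (χ : (Matrix (Fin n) (Fin n) (A ⊗[k] A))ˣ)
    (hcoc : χ.val.map (amitsurP2 k A) =
      χ.val.map (amitsurP1 k A) * χ.val.map (amitsurP3 k A))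
    (y : Fin n → A) :
    amitsurKP χ.val ((χ⁻¹).val *ᵥ (fun i => amitsurD1 k A (y i))) := by
  set u : Fin n → A ⊗[k] A := fun i => amitsurD1 k A (y i) with hu
  set U1 := Units.map (amitsurP1 k A).toRingHom.mapMatrix.toMonoidHom χ with hU1
  set U2 := Units.map (amitsurP2 k A).toRingHom.mapMatrix.toMonoidHom χ with hU2
  set U3 := Units.map (amitsurP3 k A).toRingHom.mapMatrix.toMonoidHom χ with hU3
  have hval : ∀ (g : (A ⊗[k] A) →ₐ[k] A ⊗[k] (A ⊗[k] A)),
      (Units.map g.toRingHom.mapMatrix.toMonoidHom χ).val = χ.val.map g := by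
    intro g
    simp [RingHom.mapMatrix_apply]
  have hminv : ∀ (g : (A ⊗[k] A) →ₐ[k] A ⊗[k] (A ⊗[k] A)),
      (χ⁻¹).val.map g = ((Units.map g.toRingHom.mapMatrix.toMonoidHom χ)⁻¹).val := by
    intro g
    rw [← MonoidHom.map_inv]
    simp [RingHom.mapMatrix_apply]
  have hUcoc : U2 = U1 * U3 := by
    refine Units.ext ?_
    rw [Units.val_mul, hU1, hU2, hU3, hval, hval, hval]
    exact hcoc
  have hkey : (U1⁻¹).val = U3.val * (U2⁻¹).val := by
    have h : U1⁻¹ = U3 * U2⁻¹ := by rw [hUcoc]; group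
    rw [h, Units.val_mul]
  have huu : (fun j => amitsurP1 k A (u j)) = (fun j => amitsurP2 k A (u j)) := by
    funext j
    rw [hu]
    simp only [aD1_tmul, aP1_tmul, aP2_tmul]
  intro i
  have hL : amitsurP1 k A (((χ⁻¹).val *ᵥ u) i)
      = (((χ⁻¹).val.map (amitsurP1 k A)) *ᵥ (fun j => amitsurP1 k A (u j))) i :=
    (amitsurP1 k A).toRingHom.map_mulVec _ _ i
  have hR : ∀ j, amitsurP2 k A (((χ⁻¹).val *ᵥ u) j)
      = (((χ⁻¹).val.map (amitsurP2 k A)) *ᵥ (fun j => amitsurP2 k A (u j))) j := fun j =>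
    (amitsurP2 k A).toRingHom.map_mulVec _ _ j
  rw [hL]
  calc (((χ⁻¹).val.map (amitsurP1 k A)) *ᵥ (fun j => amitsurP1 k A (u j))) i
      = ((U1⁻¹).val *ᵥ (fun j => amitsurP2 k A (u j))) i := by
        rw [hminv, huu, hU1]
    _ = ((U3.val * (U2⁻¹).val) *ᵥ (fun j => amitsurP2 k A (u j))) i := by rw [hkey]
    _ = (U3.val *ᵥ ((U2⁻¹).val *ᵥ (fun j => amitsurP2 k A (u j)))) i := by
        rw [mulVec_mulVec]
    _ = ∑ j, amitsurP3 k A (χ.val i j) * amitsurP2 k A (((χ⁻¹).val *ᵥ u) j) := by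
        rw [mulVec_sum_apply]
        refine Finset.sum_congr rfl fun j _ => ?_
        rw [hR j, hminv, hU2, hU3, hval]
        rfl

end Aux3

section Aux4
variable {k A : Type*} [Field k] [CommRing A] [Algebra k A] {n : ℕ}

lemma KP_mu {χM : Matrix (Fin n) (Fin n) (A ⊗[k] A)} {x : Fin n → A ⊗[k] A}
    (hx : amitsurKP χM x) (i : Fin n) :
    amitsurD1 k A (amitsurMu k A (x i)) = (χM *ᵥ x) i := by
  have h := congrArg (amitsurM23 k A) (hx i)
  rw [m23_P1, map_sum] at h
  rw [h, mulVec_sum_apply]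
  exact Finset.sum_congr rfl fun j _ => by rw [_root_.map_mul, m23_P3, m23_P2]

lemma V_of_KP {χM : Matrix (Fin n) (Fin n) (A ⊗[k] A)} {x : Fin n → A ⊗[k] A}
    (hx : amitsurKP χM x) (f : A →ₗ[k] k) :
    (fun i => amitsurC f (x i)) ∈ amitsurV χM := by
  intro i
  have h := congrArg (amitsurCC f) (hx i)
  rw [CC_P1, map_sum] at h
  rw [h]
  exact Finset.sum_congr rfl fun j _ => by rw [CC_P3_mul, CC_P2]

lemma unit_map_val {R S : Type*} [CommRing R] [CommRing S] (g : R →+* S)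
    (χ : (Matrix (Fin n) (Fin n) R)ˣ) :
    (Units.map g.mapMatrix.toMonoidHom χ).val = χ.val.map g := rfl

lemma unit_map_inv_val {R S : Type*} [CommRing R] [CommRing S] (g : R →+* S)
    (χ : (Matrix (Fin n) (Fin n) R)ˣ) :
    (χ⁻¹).val.map g = ((Units.map g.mapMatrix.toMonoidHom χ)⁻¹).val := by
  rw [← MonoidHom.map_inv]
  rfl

lemma unit_map_val_alg {R S : Type*} [CommRing R] [CommRing S]
    {k : Type*} [CommRing k] [Algebra k R] [Algebra k S] (g : R →ₐ[k] S)
    (χ : (Matrix (Fin n) (Fin n) R)ˣ) :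
    (Units.map g.toRingHom.mapMatrix.toMonoidHom χ).val = χ.val.map g := rfl

lemma unit_map_inv_val_alg {R S : Type*} [CommRing R] [CommRing S]
    {k : Type*} [CommRing k] [Algebra k R] [Algebra k S] (g : R →ₐ[k] S)
    (χ : (Matrix (Fin n) (Fin n) R)ˣ) :
    (χ⁻¹).val.map g = ((Units.map g.toRingHom.mapMatrix.toMonoidHom χ)⁻¹).val := by
  rw [← MonoidHom.map_inv]
  rfl

lemma span_V_top (χ : (Matrix (Fin n) (Fin n) (A ⊗[k] A))ˣ)
    (hcoc : χ.val.map (amitsurP2 k A) =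
      χ.val.map (amitsurP1 k A) * χ.val.map (amitsurP3 k A)) :
    Submodule.span A ((amitsurV χ.val : Submodule k (Fin n → A)) : Set (Fin n → A)) = ⊤ := by
  classical
  rw [Submodule.eq_top_iff']
  intro y₀
  set χμ := Units.map (amitsurMu k A).toRingHom.mapMatrix.toMonoidHom χ with hχμ
  set y : Fin n → A := χμ.val *ᵥ y₀ with hy
  set x : Fin n → A ⊗[k] A := (χ⁻¹).val *ᵥ (fun i => amitsurD1 k A (y i)) with hx
  have hKP : amitsurKP χ.val x := KP_inv_d1 χ hcoc y
  let bA := Module.Basis.ofVectorSpace k A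
  set s : Finset (Module.Basis.ofVectorSpaceIndex k A) :=
    Finset.univ.biUnion (fun i : Fin n => (amitsurF bA (x i)).support) with hs
  have hrec : ∀ i, amitsurMu k A (x i) = ∑ b ∈ s, bA b * amitsurF bA (x i) b := fun i =>
    aMu_recover bA _ s (by
      rw [hs]
      exact Finset.subset_biUnion_of_mem
        (fun i : Fin n => (amitsurF bA (x i)).support) (Finset.mem_univ i))
  have hw : ∀ b, (fun i => amitsurF bA (x i) b) ∈ amitsurV χ.val := by
    intro b
    have hfe : (fun i => amitsurF bA (x i) b) = fun i => amitsurC (bA.coord b) (x i) :=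
      funext fun i => aF_eq_C bA (x i) b
    rw [hfe]
    exact V_of_KP hKP _
  have hmux : (fun i => amitsurMu k A (x i)) = y₀ := by
    funext i
    have h1 : amitsurMu k A (x i)
        = (((χ⁻¹).val.map (amitsurMu k A)) *ᵥ (fun j => amitsurMu k A (amitsurD1 k A (y j)))) i :=
      (amitsurMu k A).toRingHom.map_mulVec _ _ i
    have h2 : (fun j => amitsurMu k A (amitsurD1 k A (y j))) = y := by
      funext j
      rw [aD1_tmul, aMu_tmul, one_mul]
    rw [h1, h2, unit_map_inv_val_alg (amitsurMu k A) χ, hy, mulVec_mulVec, ← hχμ,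
      ← Units.val_mul, inv_mul_cancel χμ, Units.val_one, one_mulVec]
  have hy₀ : y₀ = ∑ b ∈ s, bA b • (fun i => amitsurF bA (x i) b) := by
    rw [← hmux]
    funext i
    rw [Finset.sum_apply]
    rw [hrec i]
    exact Finset.sum_congr rfl fun b _ => rfl
  rw [hy₀]
  exact Submodule.sum_mem _ fun b _ =>
    Submodule.smul_mem _ _ (Submodule.subset_span (hw b))

lemma linearIndependent_A_of_V (χ : (Matrix (Fin n) (Fin n) (A ⊗[k] A))ˣ)
    {ι' : Type*} (vb : ι' → (Fin n → A))
    (hvb : ∀ l, vb l ∈ amitsurV χ.val) (hli : LinearIndependent k vb) :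
    LinearIndependent A vb := by
  classical
  rw [linearIndependent_iff]
  intro g hg
  set x : Fin n → A ⊗[k] A := fun i => ∑ l ∈ g.support, (vb l i) ⊗ₜ[k] (g l) with hxdef
  have hKP : amitsurKP χ.val x :=
    KP_sum g.support _ (fun l _ => KP_of_V (hvb l) (g l))
  have hmu : ∀ i, amitsurMu k A (x i) = 0 := by
    intro i
    have h0 : (Finsupp.linearCombination A vb g) i = 0 := by rw [hg]; rfl
    rw [Finsupp.linearCombination_apply, Finsupp.sum, Finset.sum_apply] at h0
    rw [hxdef, map_sum]
    rw [← h0]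
    exact Finset.sum_congr rfl fun l _ => by rw [aMu_tmul, mul_comm]; rfl
  have hχx : χ.val *ᵥ x = 0 := by
    funext i
    have := KP_mu hKP i
    rw [hmu i, map_zero] at this
    rw [Pi.zero_apply, ← this]
  have hx0 : x = 0 := by
    have h := congrArg (fun w => (χ⁻¹).val *ᵥ w) hχx
    simpa only [mulVec_mulVec, ← Units.val_mul, inv_mul_cancel χ, Units.val_one,
      Matrix.one_mulVec, Matrix.mulVec_zero] using h
  ext l₀
  rw [Finsupp.coe_zero, Pi.zero_apply]
  by_cases hl₀ : l₀ ∈ g.support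
  swap
  · exact Finsupp.notMem_support_iff.mp hl₀
  · set W := Submodule.span k (Set.range vb) with hW
    let G₀ : W →ₗ[k] k := (Finsupp.lapply l₀).comp hli.repr
    obtain ⟨G, hG⟩ := LinearMap.exists_extend G₀
    have hGvb : ∀ l, G (vb l) = if l = l₀ then 1 else 0 := by
      intro l
      have hmem : vb l ∈ W := Submodule.subset_span (Set.mem_range_self l)
      have h1 : G (vb l) = G₀ ⟨vb l, hmem⟩ := by
        rw [← hG]; rfl
      rw [h1]
      simp only [G₀, LinearMap.comp_apply, hli.repr_eq_single l ⟨vb l, hmem⟩ rfl,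
        Finsupp.lapply_apply, Finsupp.single_apply]
    let fj : Fin n → (A →ₗ[k] k) := fun j =>
      G.comp (LinearMap.single k (fun _ : Fin n => A) j)
    have hsum : ∀ v : Fin n → A, ∑ j, fj j (v j) = G v := by
      intro v
      calc ∑ j, fj j (v j) = G (∑ j, Pi.single j (v j)) := by
            rw [_root_.map_sum]; rfl
        _ = G v := by rw [Finset.univ_sum_single]
    have hcoeff : ∀ j, amitsurC1 (fj j) (x j) = ∑ l ∈ g.support, (fj j ((vb l) j)) • g l := by
      intro j
      rw [hxdef, map_sum]
      exact Finset.sum_congr rfl fun l _ => aC1_tmul _ _ _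
    have hfinal : ∑ j, amitsurC1 (fj j) (x j) = g l₀ := by
      calc ∑ j, amitsurC1 (fj j) (x j)
          = ∑ j, ∑ l ∈ g.support, (fj j ((vb l) j)) • g l :=
            Finset.sum_congr rfl fun j _ => hcoeff j
        _ = ∑ l ∈ g.support, ∑ j, (fj j ((vb l) j)) • g l := Finset.sum_comm
        _ = ∑ l ∈ g.support, (∑ j, fj j ((vb l) j)) • g l :=
            Finset.sum_congr rfl fun l _ => Finset.sum_smul.symm
        _ = ∑ l ∈ g.support, (G (vb l)) • g l :=
            Finset.sum_congr rfl fun l _ => by rw [hsum]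
        _ = ∑ l ∈ g.support, (if l = l₀ then (1:k) else 0) • g l :=
            Finset.sum_congr rfl fun l _ => by rw [hGvb]
        _ = ∑ l ∈ g.support, (if l = l₀ then g l else 0) :=
            Finset.sum_congr rfl fun l _ => by split <;> simp
        _ = g l₀ := by rw [Finset.sum_ite_eq' g.support l₀ g, if_pos hl₀]
    rw [← hfinal]
    simp [hx0]
end Aux4

/-- Cocycle-level classification of torsors for the σ-algebraic group
`G = {g ∈ GLₙ | σᵈ(g) = 1}`: every cocycle `χ` with `τᵈ(χ) = 1` is of the form
`δ₁(α)·δ₂(α)⁻¹` with `σᵈ(α) = a` for some `a ∈ GLₙ(k)`. -/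
theorem torsors_sigma_kernel_group (k A : Type*) [Field k] [CommRing A] [Algebra k A]
    [Nontrivial A]
    (σk : k →+* k) (σA : A →+* A)
    (hσ : ∀ c : k, σA (algebraMap k A c) = algebraMap k A (σk c))
    (τ : A ⊗[k] A →+* A ⊗[k] A)
    (hτ : ∀ a b : A, τ (a ⊗ₜ[k] b) = σA a ⊗ₜ[k] σA b)
    (n d : ℕ) (hn : 1 ≤ n) (hd : 1 ≤ d)
    (χ : (Matrix (Fin n) (Fin n) (A ⊗[k] A))ˣ)
    (hcoc : χ.val.map (amitsurP2 k A) =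
      χ.val.map (amitsurP1 k A) * χ.val.map (amitsurP3 k A))
    (hτχ : χ.val.map (τ ^ d) = (1 : Matrix (Fin n) (Fin n) (A ⊗[k] A))) :
    ∃ (α : (Matrix (Fin n) (Fin n) A)ˣ) (a : (Matrix (Fin n) (Fin n) k)ˣ),
      χ = Units.map ((amitsurD1 k A).toRingHom.mapMatrix.toMonoidHom) α *
          (Units.map ((amitsurD2 k A).toRingHom.mapMatrix.toMonoidHom) α)⁻¹ ∧
      α.val.map (σA ^ d) = a.val.map (algebraMap k A) := by
  classical
  set V := amitsurV (k := k) χ.val with hV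
  let bV := Module.Basis.ofVectorSpace k V
  set vb : Module.Basis.ofVectorSpaceIndex k V → (Fin n → A) :=
    fun l => ((bV l : V) : Fin n → A) with hvb
  have hvbV : ∀ l, vb l ∈ V := fun l => (bV l).2
  have hliK : LinearIndependent k vb := by
    have h := bV.linearIndependent.map' V.subtype (Submodule.ker_subtype V)
    exact h
  have hliA : LinearIndependent A vb := linearIndependent_A_of_V χ vb hvbV hliK
  have hspan : ⊤ ≤ Submodule.span A (Set.range vb) := by
    have h1 : (V : Set (Fin n → A)) ⊆ (Submodule.span A (Set.range vb) : Set _) := by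
      intro v hv
      have h2 : v ∈ Submodule.span k (Set.range vb) := by
        have h3 : Set.range vb = V.subtype '' Set.range ⇑bV := by
          rw [← Set.range_comp]; rfl
        rw [h3, ← Submodule.map_span, Module.Basis.span_eq]
        exact ⟨⟨v, hv⟩, Submodule.mem_top, rfl⟩
      exact Submodule.span_le_restrictScalars k A _ h2
    calc (⊤ : Submodule A (Fin n → A)) = Submodule.span A (V : Set (Fin n → A)) :=
          (span_V_top χ hcoc).symm
      _ ≤ Submodule.span A (Set.range vb) := Submodule.span_le.mpr h1
  let bAA : Module.Basis _ A (Fin n → A) := Module.Basis.mk hliA hspan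
  let e := bAA.indexEquiv (Pi.basisFun A (Fin n))
  let B := bAA.reindex e
  let αM := (Pi.basisFun A (Fin n)).toMatrix ⇑B
  have hinv : Invertible αM := (Pi.basisFun A (Fin n)).invertibleToMatrix B
  let αU : (Matrix (Fin n) (Fin n) A)ˣ := @unitOfInvertible _ _ αM hinv
  have hαU : αU.val = αM := rfl
  have hcol : ∀ j, (fun i => αM i j) ∈ V := by
    intro j
    have h1 : (fun i => αM i j) = B j := by
      funext i
      simp [αM, Module.Basis.toMatrix_apply, Pi.basisFun_repr]
    rw [h1]
    have h2 : B j = vb (e.symm j) := by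
      simp only [B, Module.Basis.reindex_apply, bAA, Module.Basis.mk_apply]
    rw [h2]
    exact hvbV _
  have hmat : αM.map (amitsurD1 k A) = χ.val * αM.map (amitsurD2 k A) := by
    ext i j
    have h := hcol j i
    simpa [Matrix.map_apply, Matrix.mul_apply] using h
  have hu : χ * Units.map ((amitsurD2 k A).toRingHom.mapMatrix.toMonoidHom) αU
      = Units.map ((amitsurD1 k A).toRingHom.mapMatrix.toMonoidHom) αU := by
    refine Units.ext ?_
    rw [Units.val_mul]
    show χ.val * αM.map (amitsurD2 k A) = αM.map (amitsurD1 k A)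
    exact hmat.symm
  -- part 2
  have hτd : ∀ a b : A, (τ ^ d) (a ⊗ₜ[k] b) = (σA ^ d) a ⊗ₜ[k] (σA ^ d) b := by
    have key : ∀ (m : ℕ) (a b : A), τ^[m] (a ⊗ₜ[k] b) = σA^[m] a ⊗ₜ[k] σA^[m] b := by
      intro m
      induction m with
      | zero => intro a b; rfl
      | succ m ih =>
          intro a b
          rw [Function.iterate_succ_apply', Function.iterate_succ_apply',
            Function.iterate_succ_apply', ih, hτ]
    intro a b
    rw [RingHom.coe_pow, RingHom.coe_pow, key]
  set β := αM.map ⇑(σA ^ d) with hβdef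
  have hβ : ∀ i j, β i j ⊗ₜ[k] (1:A) = (1:A) ⊗ₜ[k] β i j := by
    have h1 : (αM.map (amitsurD1 k A)).map (τ^d)
        = (χ.val.map (τ^d)) * (αM.map (amitsurD2 k A)).map (τ^d) := by
      rw [hmat, Matrix.map_mul]
    rw [hτχ, one_mul] at h1
    intro i j
    have h2 := (Matrix.ext_iff.mpr h1) i j
    simp only [Matrix.map_apply, aD1_tmul, aD2_tmul, hτd, _root_.map_one] at h2
    show (σA ^ d) (αM i j) ⊗ₜ[k] (1:A) = (1:A) ⊗ₜ[k] (σA ^ d) (αM i j)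
    exact h2.symm
  have hab : ∀ i j, ∃ c : k, β i j = algebraMap k A c := fun i j =>
    exists_algebraMap_of_tmul_eq _ (hβ i j)
  let aMat : Matrix (Fin n) (Fin n) k := Matrix.of (fun i j => (hab i j).choose)
  have hβa : β = aMat.map (algebraMap k A) := by
    ext i j
    exact (hab i j).choose_spec
  have hβunit : IsUnit β := by
    have h : β = (Units.map (σA ^ d).mapMatrix.toMonoidHom αU).val := rfl
    rw [h]
    exact Units.isUnit _
  have hdet : IsUnit β.det := (Matrix.isUnit_iff_isUnit_det β).mp hβunit
  have hdetmap : β.det = algebraMap k A (aMat.det) := by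
    rw [hβa]
    rw [(algebraMap k A).map_det]
    rfl
  have hadet : aMat.det ≠ 0 := by
    intro h0
    rw [hdetmap, h0, map_zero] at hdet
    exact not_isUnit_zero hdet
  obtain ⟨aU, haU⟩ := (Matrix.isUnit_iff_isUnit_det aMat).mpr
    (isUnit_iff_ne_zero.mpr hadet)
  refine ⟨αU, aU, ?_, ?_⟩
  · exact eq_mul_inv_iff_mul_eq.mpr hu
  · show αM.map ⇑(σA ^ d) = aU.val.map (algebraMap k A)
    rw [haU]
    exact hβa
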